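/- For any k,l ≥ 1 the equation [[x_1,…,x_k],[x_{k+1},…,x_{k+l}]] = ∑_{σ∈C_{k,l}} [x_{σ(1)},…,x_{σ(k+l)}] holds in the free associative ring ℤ⟨x_1,…,x_{k+l}⟩ with the commutator bracket, where all brackets on the right-hand side are left-normed. -/

import Mathlib

/-- The left-normed Lie bracket `[a₁,…,aₘ]` of a list of elements of a Lie ring,
defined by `[a₁] = a₁` and `[a₁,…,aₘ] = [[a₁,…,a_{m-1}], aₘ]` (and `0` for the empty list). -/
def lieWord {L : Type*} [LieRing L] : List L → L
  | [] => 0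
  | x :: xs => xs.foldl (fun a b => ⁅a, b⁆) x

/-- An `(s,t)`-shuffle `(α,β)` with `α(1) = 1`: a pair of strictly increasing maps
`α : {1,…,s} → {1,…,s+t}`, `β : {1,…,t} → {1,…,s+t}` with disjoint images and `α(1) = 1`
(everything 0-indexed, so the last condition reads `α 0 = 0`).  This is the set `Sh¹(s,t)`. -/
structure Shuffle1 (s t : ℕ) where
  α : Fin s → Fin (s + t)
  β : Fin t → Fin (s + t)
  mono_alpha : StrictMono α
  mono_beta : StrictMono β
  disj : ∀ i j, α i ≠ β j
  first : ∀ hs : 0 < s, α ⟨0, hs⟩ = ⟨0, Nat.lt_of_lt_of_le hs (Nat.le_add_right s t)⟩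

/-- The underlying function of the permutation `σ̃_{α,β,k,l} ∈ S_{k+l}`: it fixes `1,…,k` and
sends `k+1,…,k+i, k+i+1,…,k+l` to `k+β(i),…,k+β(1), k+α(1),…,k+α(l−i)` (here 0-indexed). -/
def sigmaTildeFun (k l i : ℕ) (hi : i < l) (sh : Shuffle1 (l - i) i) :
    Fin (k + l) → Fin (k + l) := fun x =>
  if hx : (x : ℕ) < k then x
  else if hx2 : (x : ℕ) < k + i then
    have j := sh.β ⟨i - 1 - ((x : ℕ) - k), by omega⟩
    ⟨k + (j : ℕ), by have := j.isLt; omega⟩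
  else
    have j := sh.α ⟨(x : ℕ) - k - i, by have := x.isLt; omega⟩
    ⟨k + (j : ℕ), by have := j.isLt; omega⟩

/-- The transposition `(1,2) ∈ Sₙ` (0-indexed: it swaps `0` and `1`), for `n ≥ 2`. -/
def swap01 (n : ℕ) : Equiv.Perm (Fin n) :=
  if h : 2 ≤ n then Equiv.swap ⟨0, by omega⟩ ⟨1, by omega⟩ else 1

/-- The set `C_{k,l} = {σ_{α,β,k,l} = σ̃_{α,β,k,l} ∘ (1,2)^i : 0 ≤ i ≤ l−1, (α,β) ∈ Sh¹(l−i,i)}`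
as a subset of `S_{k+l}`. -/
def Cset (k l : ℕ) : Set (Equiv.Perm (Fin (k + l))) :=
  { σ | ∃ (i : ℕ) (hi : i < l) (sh : Shuffle1 (l - i) i),
      ∀ x, σ x = sigmaTildeFun k l i hi sh ((swap01 (k + l) ^ i) x) }

attribute [local instance 100] LieRing.ofAssociativeRing


namespace BrAux

variable {L : Type*} [LieRing L]

/-- fold of brackets starting from `A`. -/
def brkt (A : L) (zs : List L) : L := zs.foldl (fun a b => ⁅a, b⁆) A

@[simp] lemma brkt_nil (A : L) : brkt A [] = A := rfl
@[simp] lemma brkt_cons (A z : L) (zs : List L) : brkt A (z :: zs) = brkt ⁅A, z⁆ zs := rfl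

lemma brkt_append (A : L) (xs ys : List L) : brkt A (xs ++ ys) = brkt (brkt A xs) ys := by
  simp [brkt, List.foldl_append]

lemma brkt_concat (A w : L) (xs : List L) : brkt A (xs ++ [w]) = ⁅brkt A xs, w⁆ := by
  simp [brkt_append]

lemma lieWord_cons (x : L) (xs : List L) : lieWord (x :: xs) = brkt x xs := rfl

lemma brkt_smul (c : ℤ) (A : L) (zs : List L) : brkt (c • A) zs = c • brkt A zs := by
  induction zs generalizing A with
  | nil => rfl
  | cons z zs ih => rw [brkt_cons, brkt_cons, smul_lie, ih]

lemma brkt_neg (A : L) (zs : List L) : brkt (-A) zs = - brkt A zs := by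
  have := brkt_smul (-1) A zs; simpa using this

/-- bracket with fixed right argument as additive hom -/
def lieRight (w : L) : L →+ L where
  toFun a := ⁅a, w⁆
  map_zero' := zero_lie w
  map_add' a b := add_lie a b w

@[simp] lemma lieRight_apply (w a : L) : lieRight w a = ⁅a, w⁆ := rfl

def selIdx {m : ℕ} (g : Fin m → Bool) : List (Fin m) := (List.finRange m).filter g

def wordOf {m : ℕ} (w : Fin m → L) (z : L) (g : Fin m → Bool) : List L :=
  (selIdx g).reverse.map w ++ z :: (selIdx (fun j => !g j)).map w

def snocEquiv (m : ℕ) : ((Fin m → Bool) × Bool) ≃ (Fin (m + 1) → Bool) where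
  toFun p := Fin.snoc p.1 p.2
  invFun g := (g ∘ Fin.castSucc, g (Fin.last m))
  left_inv p := by
    ext j
    · simp [Fin.snoc_castSucc]
    · simp [Fin.snoc_last]
  right_inv g := by
    funext j
    cases j using Fin.lastCases with
    | last => simp [Fin.snoc_last]
    | cast j => simp [Fin.snoc_castSucc]

lemma finRange_succ_snoc (m : ℕ) :
    List.finRange (m + 1) = ((List.finRange m).map Fin.castSucc) ++ [Fin.last m] := by
  rw [show List.finRange (m + 1) = List.ofFn id from (List.ofFn_id _).symm, List.ofFn_succ',
    List.concat_eq_append]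
  congr 1
  rw [← List.ofFn_id m, List.map_ofFn]
  rfl

lemma selIdx_snoc {m : ℕ} (g : Fin m → Bool) (b : Bool) :
    selIdx (Fin.snoc g b) =
      (selIdx g).map Fin.castSucc ++ (if b then [Fin.last m] else []) := by
  unfold selIdx
  rw [finRange_succ_snoc, List.filter_append, List.filter_map]
  have h1 : (Fin.snoc g b : Fin (m+1) → Bool) ∘ Fin.castSucc = g := by
    funext j; simp [Fin.snoc_castSucc]
  rw [h1]
  congr 1
  simp [List.filter, Fin.snoc_last]
  cases b <;> simp

lemma not_snoc {m : ℕ} (g : Fin m → Bool) (b : Bool) :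
    (fun j => !(Fin.snoc g b : Fin (m+1) → Bool) j) = Fin.snoc (fun j => !g j) (!b) := by
  funext j
  cases j using Fin.lastCases with
  | last => simp [Fin.snoc_last]
  | cast j => simp [Fin.snoc_castSucc]


lemma wordOf_snoc_false {m : ℕ} (w : Fin (m + 1) → L) (z : L) (g : Fin m → Bool) :
    wordOf w z (Fin.snoc g false) =
      wordOf (fun i => w i.castSucc) z g ++ [w (Fin.last m)] := by
  unfold wordOf
  rw [not_snoc, selIdx_snoc, selIdx_snoc]
  simp [List.map_map, Function.comp_def]

lemma wordOf_snoc_true {m : ℕ} (w : Fin (m + 1) → L) (z : L) (g : Fin m → Bool) :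
    wordOf w z (Fin.snoc g true) =
      w (Fin.last m) :: wordOf (fun i => w i.castSucc) z g := by
  unfold wordOf
  rw [not_snoc, selIdx_snoc, selIdx_snoc]
  simp [List.map_map, Function.comp_def]

lemma selIdx_snoc_length {m : ℕ} (g : Fin m → Bool) (b : Bool) :
    (selIdx (Fin.snoc g b)).length = (selIdx g).length + (if b then 1 else 0) := by
  rw [selIdx_snoc]
  cases b <;> simp

lemma core (m : ℕ) (w : Fin m → L) (A z : L) :
    ⁅A, brkt z (List.ofFn w)⁆ =
      ∑ g : Fin m → Bool, ((-1 : ℤ) ^ (selIdx g).length) • brkt A (wordOf w z g) := by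
  induction m generalizing A with
  | zero =>
    have hu : ∀ g : Fin 0 → Bool, g = (fun j => false) := by
      intro g; funext j; exact j.elim0
    rw [Fintype.sum_eq_single (fun _ => false) (by intro g hg; exact absurd (hu g) hg)]
    simp [selIdx, wordOf, brkt]
  | succ m ih =>
    -- sum splitting
    have hsum : ∀ F : (Fin (m + 1) → Bool) → L,
        (∑ g : Fin (m+1) → Bool, F g) =
          ∑ g' : Fin m → Bool, (F (Fin.snoc g' true) + F (Fin.snoc g' false)) := by
      intro F
      rw [← Equiv.sum_comp (snocEquiv m) F, Fintype.sum_prod_type]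
      refine Finset.sum_congr rfl fun g' _ => ?_
      rw [Fintype.sum_bool]
      rfl
    rw [hsum]
    rw [List.ofFn_succ' w, List.concat_eq_append, brkt_append]
    simp only [brkt_cons, brkt_nil]
    rw [leibniz_lie A (brkt z (List.ofFn fun i => w i.castSucc)) (w (Fin.last m))]
    rw [← lie_skew (brkt z (List.ofFn fun i => w i.castSucc)) ⁅A, w (Fin.last m)⁆]
    rw [ih (fun i => w i.castSucc) A, ih (fun i => w i.castSucc) ⁅A, w (Fin.last m)⁆]
    rw [← lieRight_apply (w (Fin.last m)), map_sum, ← Finset.sum_neg_distrib,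
      ← Finset.sum_add_distrib]
    refine Finset.sum_congr rfl fun g' _ => ?_
    rw [wordOf_snoc_true, wordOf_snoc_false, selIdx_snoc_length, selIdx_snoc_length]
    simp only [if_true, if_false, add_zero]
    rw [brkt_concat, brkt_cons, map_zsmul, lieRight_apply, pow_succ, mul_smul]
    simp only [smul_neg, neg_smul, one_smul, neg_neg]
    abel

lemma sorted_eq {n : ℕ} {l1 l2 : List (Fin n)} (h1 : l1.Pairwise (· < ·))
    (h2 : l2.Pairwise (· < ·)) (h : ∀ x, x ∈ l1 ↔ x ∈ l2) : l1 = l2 := by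
  haveI : IsAntisymm (Fin n) (· < ·) := ⟨fun a b hab hba => absurd hba (asymm hab)⟩
  have nd1 : l1.Nodup := h1.imp (fun hab => ne_of_lt hab)
  have nd2 : l2.Nodup := h2.imp (fun hab => ne_of_lt hab)
  exact List.Perm.eq_of_pairwise (fun a b _ _ hab hba => absurd hba (asymm hab)) h1 h2
    ((List.perm_ext_iff_of_nodup nd1 nd2).mpr h)

lemma Shuffle1.ext' {s t : ℕ} {a b : Shuffle1 s t} (h1 : a.α = b.α) (h2 : a.β = b.β) :
    a = b := by
  cases a; cases b; cases h1; cases h2; rfl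

instance (s t : ℕ) : Finite (Shuffle1 s t) :=
  Finite.of_injective (fun sh => (sh.α, sh.β))
    (fun a b h => Shuffle1.ext' (congrArg Prod.fst h) (congrArg Prod.snd h))

/-- index type for `C_{k,l}` -/
abbrev Tt (l : ℕ) := (i : Fin l) × Shuffle1 (l - i.1) i.1

instance (l : ℕ) : Finite (Tt l) := inferInstance

lemma beta_val_pos {l i : ℕ} (hi : i < l) (sh : Shuffle1 (l - i) i) (u : Fin i) :
    0 < (sh.β u : ℕ) := by
  rcases Nat.eq_zero_or_pos (sh.β u : ℕ) with h | h
  · exfalso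
    have hs : 0 < l - i := by omega
    apply sh.disj ⟨0, hs⟩ u
    rw [sh.first hs]
    exact Fin.ext (by simpa using h.symm)
  · exact h

lemma stf_A (k l i : ℕ) (hi : i < l) (sh : Shuffle1 (l - i) i) (x : Fin (k + l))
    (hx : (x : ℕ) < k) : sigmaTildeFun k l i hi sh x = x := by
  unfold sigmaTildeFun; rw [dif_pos hx]

lemma stf_B (k l i : ℕ) (hi : i < l) (sh : Shuffle1 (l - i) i) (x : Fin (k + l))
    (hx : ¬(x : ℕ) < k) (hx2 : (x : ℕ) < k + i) :
    (sigmaTildeFun k l i hi sh x : ℕ)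
      = k + (sh.β ⟨i - 1 - ((x : ℕ) - k), by omega⟩ : ℕ) := by
  unfold sigmaTildeFun; rw [dif_neg hx, dif_pos hx2]

lemma stf_C (k l i : ℕ) (hi : i < l) (sh : Shuffle1 (l - i) i) (x : Fin (k + l))
    (hx : ¬(x : ℕ) < k) (hx2 : ¬(x : ℕ) < k + i) :
    (sigmaTildeFun k l i hi sh x : ℕ)
      = k + (sh.α ⟨(x : ℕ) - k - i, by have := x.isLt; omega⟩ : ℕ) := by
  unfold sigmaTildeFun; rw [dif_neg hx, dif_neg hx2]

lemma sigmaTildeFun_injective (k l i : ℕ) (hi : i < l) (sh : Shuffle1 (l - i) i) :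
    Function.Injective (sigmaTildeFun k l i hi sh) := by
  intro a b h
  have hv := congrArg Fin.val h
  by_cases ha1 : (a : ℕ) < k
  · by_cases hb1 : (b : ℕ) < k
    · rwa [stf_A k l i hi sh a ha1, stf_A k l i hi sh b hb1] at h
    · exfalso
      rw [stf_A k l i hi sh a ha1] at hv
      by_cases hb2 : (b : ℕ) < k + i
      · rw [stf_B k l i hi sh b hb1 hb2] at hv; omega
      · rw [stf_C k l i hi sh b hb1 hb2] at hv; omega
  · by_cases hb1 : (b : ℕ) < k
    · exfalso
      rw [stf_A k l i hi sh b hb1] at hv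
      by_cases ha2 : (a : ℕ) < k + i
      · rw [stf_B k l i hi sh a ha1 ha2] at hv; omega
      · rw [stf_C k l i hi sh a ha1 ha2] at hv; omega
    · by_cases ha2 : (a : ℕ) < k + i <;> by_cases hb2 : (b : ℕ) < k + i
      · rw [stf_B k l i hi sh a ha1 ha2, stf_B k l i hi sh b hb1 hb2] at hv
        have heq : sh.β ⟨i - 1 - ((a : ℕ) - k), by omega⟩
            = sh.β ⟨i - 1 - ((b : ℕ) - k), by omega⟩ := Fin.ext (by omega)
        have := congrArg Fin.val (sh.mono_beta.injective heq)
        simp only [] at this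
        exact Fin.ext (by omega)
      · exfalso
        rw [stf_B k l i hi sh a ha1 ha2, stf_C k l i hi sh b hb1 hb2] at hv
        exact sh.disj ⟨(b : ℕ) - k - i, by have := b.isLt; omega⟩
          ⟨i - 1 - ((a : ℕ) - k), by omega⟩ (Fin.ext (by omega))
      · exfalso
        rw [stf_C k l i hi sh a ha1 ha2, stf_B k l i hi sh b hb1 hb2] at hv
        exact sh.disj ⟨(a : ℕ) - k - i, by have := a.isLt; omega⟩
          ⟨i - 1 - ((b : ℕ) - k), by omega⟩ (Fin.ext (by omega))
      · rw [stf_C k l i hi sh a ha1 ha2, stf_C k l i hi sh b hb1 hb2] at hv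
        have heq : sh.α ⟨(a : ℕ) - k - i, by have := a.isLt; omega⟩
            = sh.α ⟨(b : ℕ) - k - i, by have := b.isLt; omega⟩ := Fin.ext (by omega)
        have := congrArg Fin.val (sh.mono_alpha.injective heq)
        simp only [] at this
        have hal := a.isLt; have hbl := b.isLt
        exact Fin.ext (by omega)

noncomputable def Phi (k l : ℕ) (t : Tt l) : Equiv.Perm (Fin (k + l)) :=
  (swap01 (k + l) ^ t.1.1).trans
    (Equiv.ofBijective (sigmaTildeFun k l t.1.1 t.1.isLt t.2)
      (Finite.injective_iff_bijective.mp (sigmaTildeFun_injective k l t.1.1 t.1.isLt t.2)))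

lemma Phi_apply (k l : ℕ) (t : Tt l) (x : Fin (k + l)) :
    Phi k l t x = sigmaTildeFun k l t.1.1 t.1.isLt t.2 ((swap01 (k + l) ^ t.1.1) x) := rfl

lemma Cset_eq_range (k l : ℕ) : Cset k l = Set.range (Phi k l) := by
  ext σ
  constructor
  · rintro ⟨i, hi, sh, hσ⟩
    exact ⟨⟨⟨i, hi⟩, sh⟩, Equiv.ext fun x => (hσ x).symm⟩
  · rintro ⟨t, rfl⟩
    exact ⟨t.1.1, t.1.isLt, t.2, fun x => rfl⟩

lemma swap01_sq (n : ℕ) : swap01 n ^ 2 = 1 := by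
  unfold swap01
  split_ifs with h
  · rw [sq, Equiv.swap_mul_self]
  · rw [one_pow]

lemma swap01_pow_invol (n i : ℕ) (x : Fin n) :
    (swap01 n ^ i) ((swap01 n ^ i) x) = x := by
  have : (swap01 n ^ i) * (swap01 n ^ i) = 1 := by
    rw [← pow_add, ← two_mul, pow_mul, swap01_sq, one_pow]
  calc (swap01 n ^ i) ((swap01 n ^ i) x)
      = ((swap01 n ^ i) * (swap01 n ^ i)) x := rfl
    _ = x := by rw [this]; rfl

lemma swap01_fix {n : ℕ} (x : Fin n) (hx : 2 ≤ (x : ℕ)) : swap01 n x = x := by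
  unfold swap01
  have h2 : 2 ≤ n := by have := x.isLt; omega
  rw [dif_pos h2]
  exact Equiv.swap_apply_of_ne_of_ne (fun hc => by have := congrArg Fin.val hc; simp at this; omega)
    (fun hc => by have := congrArg Fin.val hc; simp at this; omega)

lemma swap01_pow_fix {n : ℕ} (i : ℕ) (x : Fin n) (hx : 2 ≤ (x : ℕ)) :
    (swap01 n ^ i) x = x := by
  induction i with
  | zero => rfl
  | succ i ih => rw [pow_succ, Equiv.Perm.mul_apply, swap01_fix x hx, ih]

lemma stf_B' (k l i : ℕ) (hi : i < l) (sh : Shuffle1 (l - i) i) (x : Fin (k + l))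
    (hx : ¬(x : ℕ) < k) (hx2 : (x : ℕ) < k + i) (u : Fin i)
    (hu : (u : ℕ) = i - 1 - ((x : ℕ) - k)) :
    (sigmaTildeFun k l i hi sh x : ℕ) = k + (sh.β u : ℕ) := by
  rw [stf_B k l i hi sh x hx hx2]
  exact (congrArg (fun w => k + w) (congrArg Fin.val (congrArg sh.β (Fin.ext hu)))).symm

lemma stf_C' (k l i : ℕ) (hi : i < l) (sh : Shuffle1 (l - i) i) (x : Fin (k + l))
    (hx : ¬(x : ℕ) < k) (hx2 : ¬(x : ℕ) < k + i) (u : Fin (l - i))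
    (hu : (u : ℕ) = (x : ℕ) - k - i) :
    (sigmaTildeFun k l i hi sh x : ℕ) = k + (sh.α u : ℕ) := by
  rw [stf_C k l i hi sh x hx hx2]
  exact (congrArg (fun w => k + w) (congrArg Fin.val (congrArg sh.α (Fin.ext hu)))).symm

lemma Phi_at_ki (k l i : ℕ) (hi : i < l) (hk : 1 ≤ k) (sh : Shuffle1 (l - i) i) :
    Phi k l ⟨⟨i, hi⟩, sh⟩ ⟨k + i, by omega⟩ = ⟨k, by omega⟩ := by
  have hfix : (swap01 (k + l) ^ i) (⟨k + i, by omega⟩ : Fin (k + l)) = ⟨k + i, by omega⟩ := by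
    rcases Nat.eq_zero_or_pos i with h0 | h0
    · subst h0; rw [pow_zero]; rfl
    · exact swap01_pow_fix i _ (by simp <;> omega)
  have h0 : (0 : ℕ) < l - i := by omega
  rw [Phi_apply]
  simp only [hfix]
  apply Fin.ext
  rw [stf_C' k l i hi sh _ (by simp <;> omega) (by simp) ⟨0, h0⟩ (by simp)]
  rw [sh.first h0]
  simp

lemma stf_ext (k l i : ℕ) (hi hi' : i < l) (sh sh' : Shuffle1 (l - i) i)
    (hf : ∀ x, sigmaTildeFun k l i hi sh x = sigmaTildeFun k l i hi' sh' x)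
    (hk : 1 ≤ k) : sh = sh' := by
  have hβ : sh.β = sh'.β := by
    funext u
    have hu := u.isLt
    have hv := congrArg Fin.val (hf ⟨k + (i - 1 - (u : ℕ)), by omega⟩)
    rw [stf_B' k l i hi sh _ (by simp) (by simp <;> omega) u (by simp <;> omega),
      stf_B' k l i hi' sh' _ (by simp) (by simp <;> omega) u (by simp <;> omega)] at hv
    exact Fin.ext (by omega)
  have hα : sh.α = sh'.α := by
    funext u
    have hu := u.isLt
    have hv := congrArg Fin.val (hf ⟨k + i + (u : ℕ), by omega⟩)
    rw [stf_C' k l i hi sh _ (by simp <;> omega) (by simp <;> omega) u (by simp <;> omega),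
      stf_C' k l i hi' sh' _ (by simp <;> omega) (by simp <;> omega) u (by simp <;> omega)] at hv
    exact Fin.ext (by omega)
  exact Shuffle1.ext' hα hβ

lemma Phi_injective (k l : ℕ) (hk : 1 ≤ k) : Function.Injective (Phi k l) := by
  intro t t' h
  obtain ⟨⟨i, hi⟩, sh⟩ := t
  obtain ⟨⟨i', hi'⟩, sh'⟩ := t'
  have hii : i = i' := by
    have h1 := Phi_at_ki k l i hi hk sh
    have h2 := Phi_at_ki k l i' hi' hk sh'
    rw [h] at h1
    have := (Phi k l ⟨⟨i', hi'⟩, sh'⟩).injective (h1.trans h2.symm)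
    have := congrArg Fin.val this
    simpa using this
  subst hii
  have hf : ∀ x, sigmaTildeFun k l i hi sh x = sigmaTildeFun k l i hi' sh' x := by
    intro x
    have h1 : Phi k l ⟨⟨i, hi⟩, sh⟩ ((swap01 (k + l) ^ i) x)
        = sigmaTildeFun k l i hi sh x := by
      rw [Phi_apply]; simp only [swap01_pow_invol]
    have h2 : Phi k l ⟨⟨i, hi'⟩, sh'⟩ ((swap01 (k + l) ^ i) x)
        = sigmaTildeFun k l i hi' sh' x := by
      rw [Phi_apply]; simp only [swap01_pow_invol]
    rw [← h1, ← h2, h]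
  exact congrArg (fun z => (⟨⟨i, hi⟩, z⟩ : Tt l)) (stf_ext k l i hi hi' sh sh' hf hk)

lemma lieWord_cons_cons (a b : L) (r : List L) : lieWord (a :: b :: r) = brkt ⁅a, b⁆ r := rfl

lemma lieWord_swap_first (a b : L) (r : List L) :
    lieWord (b :: a :: r) = - lieWord (a :: b :: r) := by
  rw [lieWord_cons_cons, lieWord_cons_cons, (lie_skew b a).symm,
    brkt_neg]

lemma ofFn_two {α : Type*} (n : ℕ) (u : Fin (n + 2) → α) :
    List.ofFn u = u 0 :: u 1 :: List.ofFn (fun p : Fin n => p.succ.succ |> u) := by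
  apply List.ext_getElem (by simp)
  intro p h1 h2
  rw [List.getElem_ofFn]
  match p with
  | 0 =>
    rw [List.getElem_cons_zero]
    exact congrArg u (Fin.ext (by simp))
  | 1 =>
    rw [List.getElem_cons_succ, List.getElem_cons_zero]
    exact congrArg u (Fin.ext (by simp))
  | (p + 2) =>
    rw [List.getElem_cons_succ, List.getElem_cons_succ, List.getElem_ofFn]
    exact congrArg u (Fin.ext (by simp [Fin.val_succ]))

lemma ofFn_swap_list {α : Type*} (n : ℕ) (u : Fin (n + 2) → α) :
    List.ofFn (fun p => u (Equiv.swap (⟨0, by omega⟩ : Fin (n + 2)) ⟨1, by omega⟩ p))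
      = u 1 :: u 0 :: List.ofFn (fun p : Fin n => p.succ.succ |> u) := by
  apply List.ext_getElem (by simp)
  intro p h1 h2
  rw [List.getElem_ofFn]
  match p with
  | 0 =>
    rw [List.getElem_cons_zero]
    apply congrArg u
    rw [show (⟨0, by omega⟩ : Fin (n + 2)) = ⟨0, by omega⟩ from rfl, Equiv.swap_apply_left]
    exact Fin.ext (by simp)
  | 1 =>
    rw [List.getElem_cons_succ, List.getElem_cons_zero]
    apply congrArg u
    rw [show (⟨1, by omega⟩ : Fin (n + 2)) = ⟨1, by omega⟩ from rfl, Equiv.swap_apply_right]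
    exact Fin.ext (by simp)
  | (p + 2) =>
    rw [List.getElem_cons_succ, List.getElem_cons_succ, List.getElem_ofFn]
    apply congrArg u
    rw [Equiv.swap_apply_of_ne_of_ne
      (fun hc => by have := congrArg Fin.val hc; simp at this)
      (fun hc => by have := congrArg Fin.val hc; simp at this)]
    exact Fin.ext (by simp [Fin.val_succ])

lemma lieWord_swap {n : ℕ} (u : Fin (n + 2) → L) :
    lieWord (List.ofFn fun p =>
        u (Equiv.swap (⟨0, by omega⟩ : Fin (n + 2)) ⟨1, by omega⟩ p))
      = - lieWord (List.ofFn u) := by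
  rw [ofFn_swap_list, ofFn_two n u, lieWord_swap_first]

lemma lieWord_swap01_pow {n : ℕ} (hn : 2 ≤ n) (u : Fin n → L) (i : ℕ) :
    lieWord (List.ofFn fun p => u ((swap01 n ^ i) p))
      = ((-1 : ℤ) ^ i) • lieWord (List.ofFn u) := by
  obtain ⟨n', rfl⟩ : ∃ n', n = n' + 2 := ⟨n - 2, by omega⟩
  rcases Nat.even_or_odd i with he | ho
  · have h1 : swap01 (n' + 2) ^ i = 1 := by
      obtain ⟨c, rfl⟩ := he
      rw [← two_mul, pow_mul, swap01_sq, one_pow]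
    rw [h1, he.neg_one_pow, one_smul]
    rfl
  · have h1 : swap01 (n' + 2) ^ i = swap01 (n' + 2) := by
      obtain ⟨c, rfl⟩ := ho
      rw [pow_succ, pow_mul, swap01_sq, one_pow, one_mul]
    rw [h1, ho.neg_one_pow, neg_one_smul]
    have h2 : swap01 (n' + 2) = Equiv.swap ⟨0, by omega⟩ ⟨1, by omega⟩ := dif_pos (by omega)
    rw [h2]
    exact lieWord_swap u

lemma lieWord_ofFn_append {k' : ℕ} (a : Fin (k' + 1) → L) (ys : List L) :
    lieWord (List.ofFn a ++ ys) = brkt (lieWord (List.ofFn a)) ys := by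
  rw [List.ofFn_succ, List.cons_append, lieWord_cons, lieWord_cons, brkt_append]

def betaC (m i : ℕ) (hi : i < m + 1) (sh : Shuffle1 (m + 1 - i) i) : Fin i → Fin (m + 1) :=
  fun u => ⟨(sh.β u : ℕ), by have := (sh.β u).isLt; omega⟩

def alphaC (m i : ℕ) (hi : i < m + 1) (sh : Shuffle1 (m + 1 - i) i) :
    Fin (m + 1 - i) → Fin (m + 1) :=
  fun u => ⟨(sh.α u : ℕ), by have := (sh.α u).isLt; omega⟩

def gOf (m i : ℕ) (sh : Shuffle1 (m + 1 - i) i) : Fin m → Bool :=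
  fun j => decide (∃ u, (sh.β u : ℕ) = (j : ℕ) + 1)

lemma pairwise_ofFn_of_strictMono {n r : ℕ} {f : Fin r → Fin n} (hf : StrictMono f) :
    (List.ofFn f).Pairwise (· < ·) :=
  List.pairwise_ofFn.mpr fun _ _ h => hf h

lemma pairwise_filter_finRange {m : ℕ} (p : Fin m → Bool) :
    ((List.finRange m).filter p).Pairwise (· < ·) :=
  List.Pairwise.sublist List.filter_sublist (List.pairwise_lt_finRange m)

lemma pairwise_map_succ {m : ℕ} {ll : List (Fin m)} (h : ll.Pairwise (· < ·)) :
    (ll.map Fin.succ).Pairwise (· < ·) := by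
  rw [List.pairwise_map]
  exact h.imp fun hab => Fin.succ_lt_succ_iff.mpr hab

lemma key1 (m i : ℕ) (hi : i < m + 1) (sh : Shuffle1 (m + 1 - i) i) :
    List.ofFn (betaC m i hi sh) = ((List.finRange m).filter (gOf m i sh)).map Fin.succ := by
  apply sorted_eq
  · exact pairwise_ofFn_of_strictMono (fun a b hab => by
      have := sh.mono_beta hab
      simp only [betaC, Fin.mk_lt_mk]
      exact this)
  · exact pairwise_map_succ (pairwise_filter_finRange _)
  intro x
  rw [List.mem_ofFn]
  simp only [List.mem_map, List.mem_filter, List.mem_finRange, true_and, gOf,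
    decide_eq_true_eq, Set.mem_range]
  constructor
  · rintro ⟨u, rfl⟩
    have hpos : 0 < (sh.β u : ℕ) := beta_val_pos hi sh u
    have hlt : (sh.β u : ℕ) < m + 1 := by have := (sh.β u).isLt; omega
    refine ⟨⟨(sh.β u : ℕ) - 1, by omega⟩, ⟨u, by simp; omega⟩, ?_⟩
    apply Fin.ext
    simp [betaC, Fin.val_succ]
    omega
  · rintro ⟨j, ⟨u, hu⟩, rfl⟩
    exact ⟨u, Fin.ext (by simp [betaC, Fin.val_succ, hu])⟩

lemma alpha_range (m i : ℕ) (hi : i < m + 1) (sh : Shuffle1 (m + 1 - i) i) (x : Fin (m + 1)) :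
    (∃ u, alphaC m i hi sh u = x) ↔ ¬(∃ u, betaC m i hi sh u = x) := by
  have hinj : Function.Injective (Sum.elim (alphaC m i hi sh) (betaC m i hi sh)) := by
    rintro (a | a) (b | b) h <;> simp only [Sum.elim_inl, Sum.elim_inr] at h
    · have : sh.α a = sh.α b := Fin.ext (by simpa [alphaC, Fin.mk.injEq] using h)
      rw [sh.mono_alpha.injective this]
    · exfalso
      exact sh.disj a b (Fin.ext (by simpa [alphaC, betaC, Fin.mk.injEq] using h))
    · exfalso
      exact sh.disj b a (Fin.ext (by simpa [alphaC, betaC, Fin.mk.injEq] using h.symm))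
    · have : sh.β a = sh.β b := Fin.ext (by simpa [betaC, Fin.mk.injEq] using h)
      rw [sh.mono_beta.injective this]
  have hsurj : Function.Surjective (Sum.elim (alphaC m i hi sh) (betaC m i hi sh)) := by
    have hcard : Fintype.card (Fin (m + 1 - i) ⊕ Fin i) = Fintype.card (Fin (m + 1)) := by
      simp; omega
    exact ((Fintype.bijective_iff_injective_and_card _).mpr ⟨hinj, hcard⟩).surjective
  constructor
  · rintro ⟨u, rfl⟩ ⟨v, hv⟩
    exact sh.disj u v (Fin.ext (by
      have := congrArg Fin.val hv
      simp [alphaC, betaC] at this ⊢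
      omega))
  · intro hne
    obtain ⟨w, hw⟩ := hsurj x
    cases w with
    | inl a => exact ⟨a, hw⟩
    | inr b => exact absurd ⟨b, hw⟩ hne

lemma key2 (m i : ℕ) (hi : i < m + 1) (sh : Shuffle1 (m + 1 - i) i) :
    List.ofFn (alphaC m i hi sh)
      = (0 : Fin (m + 1)) ::
          ((List.finRange m).filter (fun j => !gOf m i sh j)).map Fin.succ := by
  apply sorted_eq
  · exact pairwise_ofFn_of_strictMono (fun a b hab => by
      have := sh.mono_alpha hab
      simp only [alphaC, Fin.mk_lt_mk]
      exact this)
  · rw [List.pairwise_cons]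
    constructor
    · intro y hy
      simp only [List.mem_map] at hy
      obtain ⟨j, _, rfl⟩ := hy
      exact Fin.succ_pos j
    · exact pairwise_map_succ (pairwise_filter_finRange _)
  intro x
  rw [List.mem_ofFn]
  simp only [Set.mem_range, List.mem_cons, List.mem_map, List.mem_filter, List.mem_finRange,
    true_and, gOf, Bool.not_eq_true', decide_eq_false_iff_not]
  rw [show (∃ u, alphaC m i hi sh u = x) ↔ ¬∃ u, betaC m i hi sh u = x
    from alpha_range m i hi sh x]
  constructor
  · intro hne
    by_cases hx : x = 0
    · exact Or.inl hx
    · refine Or.inr ⟨⟨(x : ℕ) - 1, by have := x.isLt; omega⟩, ?_, ?_⟩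
      · intro ⟨u, hu⟩
        apply hne
        refine ⟨u, Fin.ext ?_⟩
        have hx0 : (x : ℕ) ≠ 0 := fun hc => hx (Fin.ext hc)
        simp [betaC] at hu ⊢
        omega
      · apply Fin.ext
        have hx0 : (x : ℕ) ≠ 0 := fun hc => hx (Fin.ext hc)
        simp [Fin.val_succ]
        omega
  · rintro (rfl | ⟨j, hj, rfl⟩) ⟨u, hu⟩
    · have := beta_val_pos hi sh u
      have := congrArg Fin.val hu
      simp [betaC] at this
      omega
    · exact hj ⟨u, by have := congrArg Fin.val hu; simp [betaC, Fin.val_succ] at this; omega⟩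

lemma count_eq (m i : ℕ) (hi : i < m + 1) (sh : Shuffle1 (m + 1 - i) i) :
    ((List.finRange m).filter (gOf m i sh)).length = i := by
  have := congrArg List.length (key1 m i hi sh)
  simpa using this.symm

lemma gOf_inj (m : ℕ) (t t' : Tt (m + 1))
    (h : gOf m t.1.1 t.2 = gOf m t'.1.1 t'.2) : t = t' := by
  obtain ⟨⟨i, hi⟩, sh⟩ := t
  obtain ⟨⟨i', hi'⟩, sh'⟩ := t'
  simp only at h
  have hii : i = i' := by
    have h1 := count_eq m i hi sh
    have h2 := count_eq m i' hi' sh'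
    rw [h] at h1
    omega
  subst hii
  have hβl := key1 m i hi sh
  have hβl' := key1 m i hi' sh'
  rw [← h] at hβl'
  have hβ : sh.β = sh'.β := by
    have := List.ofFn_inj.mp (hβl.trans hβl'.symm)
    funext u
    have := congrArg Fin.val (congrFun this u)
    simp [betaC] at this
    exact Fin.ext this
  have hαl := key2 m i hi sh
  have hαl' := key2 m i hi' sh'
  rw [← h] at hαl'
  have hα : sh.α = sh'.α := by
    have := List.ofFn_inj.mp (hαl.trans hαl'.symm)
    funext u
    have := congrArg Fin.val (congrFun this u)
    simp [alphaC] at this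
    exact Fin.ext this
  exact congrArg (fun z => (⟨⟨i, hi⟩, z⟩ : Tt (m + 1))) (Shuffle1.ext' hα hβ)

lemma gOf_surj (m : ℕ) (g : Fin m → Bool) : ∃ t : Tt (m + 1), gOf m t.1.1 t.2 = g := by
  classical
  set S : Finset (Fin (m + 1)) :=
    Finset.image Fin.succ (Finset.univ.filter (fun j => g j = true)) with hSdef
  have hS0 : (0 : Fin (m + 1)) ∉ S := by
    simp only [hSdef, Finset.mem_image]
    rintro ⟨j, _, hj⟩
    exact Fin.succ_ne_zero j hj
  have hcard : S.card ≤ m := by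
    calc S.card ≤ (Finset.univ.filter (fun j => g j = true)).card := Finset.card_image_le
    _ ≤ (Finset.univ : Finset (Fin m)).card := Finset.card_filter_le _ _
    _ = m := by simp
  have hi : S.card < m + 1 := by omega
  have hcompl : Sᶜ.card = m + 1 - S.card := by
    rw [Finset.card_compl]
    simp
  refine ⟨⟨⟨S.card, hi⟩, ?_⟩, ?_⟩
  · exact
      { α := fun u => ⟨((Sᶜ.orderEmbOfFin hcompl) u : ℕ),
          by have := ((Sᶜ.orderEmbOfFin hcompl) u).isLt; omega⟩
        β := fun u => ⟨((S.orderEmbOfFin rfl) u : ℕ),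
          by have := ((S.orderEmbOfFin rfl) u).isLt; omega⟩
        mono_alpha := fun a b hab =>
          Fin.mk_lt_mk.mpr ((Sᶜ.orderEmbOfFin hcompl).strictMono hab)
        mono_beta := fun a b hab =>
          Fin.mk_lt_mk.mpr ((S.orderEmbOfFin rfl).strictMono hab)
        disj := by
          intro a b hab
          have hv : (Sᶜ.orderEmbOfFin hcompl) a = (S.orderEmbOfFin rfl) b :=
            Fin.ext (by simpa [Fin.mk.injEq] using hab)
          have h1 := Finset.orderEmbOfFin_mem Sᶜ hcompl a
          have h2 := Finset.orderEmbOfFin_mem S rfl b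
          rw [hv] at h1
          exact (Finset.mem_compl.mp h1) h2
        first := by
          intro hs
          apply Fin.ext
          simp only
          rw [Finset.orderEmbOfFin_zero hcompl hs]
          have h0mem : (0 : Fin (m + 1)) ∈ Sᶜ := Finset.mem_compl.mpr hS0
          have hmin : Sᶜ.min' ⟨0, h0mem⟩ = 0 :=
            le_antisymm (Finset.min'_le _ _ h0mem) (Fin.zero_le _)
          rw [hmin]
          simp }
  · funext j
    have hiff : (∃ u, ((S.orderEmbOfFin rfl u : Fin (m + 1)) : ℕ) = (j : ℕ) + 1)
        ↔ g j = true := by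
      constructor
      · rintro ⟨u, hu⟩
        have hmem := Finset.orderEmbOfFin_mem S rfl u
        have heq : S.orderEmbOfFin rfl u = j.succ := Fin.ext (by simp [Fin.val_succ, hu])
        rw [heq] at hmem
        simp only [hSdef, Finset.mem_image, Finset.mem_filter] at hmem
        obtain ⟨j', ⟨_, hg⟩, hj'⟩ := hmem
        rwa [← Fin.succ_injective _ hj']
      · intro hg
        have hmem : j.succ ∈ S := by
          simp only [hSdef, Finset.mem_image, Finset.mem_filter]
          exact ⟨j, ⟨Finset.mem_univ j, hg⟩, rfl⟩
        have hr : (j.succ : Fin (m + 1)) ∈ Set.range (S.orderEmbOfFin rfl) := by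
          rw [Finset.range_orderEmbOfFin]; exact hmem
        obtain ⟨u, hu⟩ := hr
        exact ⟨u, by rw [hu]; simp [Fin.val_succ]⟩
    show decide (∃ u, ((S.orderEmbOfFin rfl u : Fin (m + 1)) : ℕ) = (j : ℕ) + 1) = g j
    cases hgj : g j
    · apply decide_eq_false
      rw [hiff, hgj]
      simp
    · apply decide_eq_true
      rw [hiff, hgj]

lemma yword_eq (k m i : ℕ) (hi : i < m + 1) (sh : Shuffle1 (m + 1 - i) i) {A' : Type*}
    (v : Fin (k + (m + 1)) → A') :
    List.ofFn (fun q : Fin (m + 1) => v (sigmaTildeFun k (m + 1) i hi sh (Fin.natAdd k q)))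
      = (List.ofFn (betaC m i hi sh)).reverse.map (fun j => v (Fin.natAdd k j))
        ++ (List.ofFn (alphaC m i hi sh)).map (fun j => v (Fin.natAdd k j)) := by
  apply List.ext_getElem (by simp <;> omega)
  intro p h1 h2
  simp only [List.length_ofFn] at h1
  rw [List.getElem_ofFn]
  by_cases hp : p < i
  · rw [List.getElem_append_left (by simp <;> omega)]
    rw [List.getElem_map, List.getElem_reverse, List.getElem_ofFn]
    apply congrArg v
    apply Fin.ext
    rw [stf_B' k (m + 1) i hi sh _ (by simp <;> omega) (by simp <;> omega) ⟨i - 1 - p, by omega⟩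
      (by simp <;> omega)]
    simp [betaC, List.length_ofFn]
  · rw [List.getElem_append_right (by simp <;> omega)]
    rw [List.getElem_map, List.getElem_ofFn]
    apply congrArg v
    apply Fin.ext
    rw [stf_C' k (m + 1) i hi sh _ (by simp <;> omega) (by simp <;> omega) ⟨p - i, by omega⟩
      (by simp <;> omega)]
    simp [alphaC, List.length_ofFn]

lemma word_match (k m i : ℕ) (hi : i < m + 1) (sh : Shuffle1 (m + 1 - i) i)
    (v : Fin (k + (m + 1)) → L) :
    List.ofFn (fun q : Fin (m + 1) => v (sigmaTildeFun k (m + 1) i hi sh (Fin.natAdd k q)))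
      = wordOf (fun j : Fin m => v (Fin.natAdd k j.succ)) (v (Fin.natAdd k 0))
          (gOf m i sh) := by
  rw [yword_eq k m i hi sh v]
  unfold wordOf selIdx
  congr 1
  · rw [key1 m i hi sh, ← List.map_reverse, List.map_map]
    rfl
  · rw [key2 m i hi sh]
    simp [List.map_map, Function.comp_def]

lemma term_eq (k' m i : ℕ) (hi : i < m + 1) (sh : Shuffle1 (m + 1 - i) i) :
    lieWord (List.ofFn fun p => FreeAlgebra.ι ℤ (Phi (k' + 1) (m + 1) ⟨⟨i, hi⟩, sh⟩ p))
      = ((-1 : ℤ) ^ (selIdx (gOf m i sh)).length) •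
          brkt (lieWord (List.ofFn fun j : Fin (k' + 1) =>
              FreeAlgebra.ι ℤ (Fin.castAdd (m + 1) j)))
            (wordOf (fun j : Fin m => FreeAlgebra.ι ℤ (Fin.natAdd (k' + 1) j.succ))
              (FreeAlgebra.ι ℤ (Fin.natAdd (k' + 1) 0)) (gOf m i sh)) := by
  have h2n : 2 ≤ k' + 1 + (m + 1) := by omega
  have hstep1 := lieWord_swap01_pow h2n
    (fun p => FreeAlgebra.ι ℤ (sigmaTildeFun (k' + 1) (m + 1) i hi sh p)) i
  rw [show (List.ofFn fun p => FreeAlgebra.ι ℤ (Phi (k' + 1) (m + 1) ⟨⟨i, hi⟩, sh⟩ p))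
      = (List.ofFn fun p => FreeAlgebra.ι ℤ
          (sigmaTildeFun (k' + 1) (m + 1) i hi sh ((swap01 (k' + 1 + (m + 1)) ^ i) p)))
    from rfl]
  rw [hstep1]
  rw [show (selIdx (gOf m i sh)).length = i from count_eq m i hi sh]
  congr 1
  rw [List.ofFn_add (f := fun p => FreeAlgebra.ι ℤ (sigmaTildeFun (k' + 1) (m + 1) i hi sh p))]
  rw [show (fun p : Fin (k' + 1) => FreeAlgebra.ι ℤ
        (sigmaTildeFun (k' + 1) (m + 1) i hi sh (Fin.castLE (by omega) p)))
      = (fun p : Fin (k' + 1) => FreeAlgebra.ι ℤ (Fin.castAdd (m + 1) p))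
    from funext fun p => congrArg _ (stf_A (k' + 1) (m + 1) i hi sh _ (by simp; omega))]
  rw [lieWord_ofFn_append]
  rw [word_match (k' + 1) m i hi sh (FreeAlgebra.ι ℤ)]

end BrAux

/-- For `k, l ≥ 1` the equation
`[[x₁,…,x_k],[x_{k+1},…,x_{k+l}]] = ∑_{σ ∈ C_{k,l}} [x_{σ(1)},…,x_{σ(k+l)}]`
holds in the free associative ring `ℤ⟨x₁,…,x_{k+l}⟩` with commutator bracket. -/
theorem bracket_bracket_eq_sum_Cset (k l : ℕ) (hk : 1 ≤ k) (hl : 1 ≤ l) :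
    ⁅lieWord (List.ofFn fun j : Fin k => FreeAlgebra.ι ℤ (Fin.castAdd l j)),
      lieWord (List.ofFn fun j : Fin l => FreeAlgebra.ι ℤ (Fin.natAdd k j))⁆ =
      ∑ᶠ σ ∈ Cset k l, lieWord (List.ofFn fun i => FreeAlgebra.ι ℤ (σ i)) := by
  classical
  obtain ⟨m, rfl⟩ : ∃ m, l = m + 1 := ⟨l - 1, by omega⟩
  obtain ⟨k', rfl⟩ : ∃ k', k = k' + 1 := ⟨k - 1, by omega⟩
  haveI : Fintype (BrAux.Tt (m + 1)) := Fintype.ofFinite _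
  rw [BrAux.Cset_eq_range (k' + 1) (m + 1),
    finsum_mem_range (BrAux.Phi_injective (k' + 1) (m + 1) hk),
    finsum_eq_sum_of_fintype]
  rw [show lieWord (List.ofFn fun j : Fin (m + 1) =>
        FreeAlgebra.ι ℤ (Fin.natAdd (k' + 1) j))
      = BrAux.brkt (FreeAlgebra.ι ℤ (Fin.natAdd (k' + 1) 0))
          (List.ofFn fun j : Fin m => FreeAlgebra.ι ℤ (Fin.natAdd (k' + 1) j.succ))
    from by rw [List.ofFn_succ]; rfl]
  rw [BrAux.core m _ _ _]
  refine (Finset.sum_bij (fun (t : BrAux.Tt (m + 1)) _ => BrAux.gOf m t.1.1 t.2)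
    (fun t _ => Finset.mem_univ _)
    (fun t _ t' _ h => BrAux.gOf_inj m t t' h)
    (fun g _ => by obtain ⟨t, ht⟩ := BrAux.gOf_surj m g; exact ⟨t, Finset.mem_univ t, ht⟩)
    ?_).symm
  intro t _
  obtain ⟨⟨i, hi⟩, sh⟩ := t
  exact BrAux.term_eq k' m i hi sh
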